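/- Let (D, ≤, u) be a dimension group with functions r(d) (least rational with r(d)·u ≥ d) and l(d) (greatest rational with l(d)·u ≤ d). Then r(d) = 0 and l(d) = 0 together imply d = 0, and conversely r(0) = l(0) = 0. -/

import Mathlib

/-- `q • u ≥ d` for a rational `q`, interpreted by clearing denominators: for every
representation `q = a / b` with `b > 0` we have `b • d ≤ a • u`. -/
def ratGe {D : Type*} [AddCommGroup D] [PartialOrder D] (u d : D) (q : ℚ) : Prop :=
  ∀ a b : ℤ, 0 < b → q = (a : ℚ) / (b : ℚ) → b • d ≤ a • u

/-- `q • u ≤ d` for a rational `q`, interpreted by clearing denominators. -/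
def ratLe {D : Type*} [AddCommGroup D] [PartialOrder D] (u d : D) (q : ℚ) : Prop :=
  ∀ a b : ℤ, 0 < b → q = (a : ℚ) / (b : ℚ) → a • u ≤ b • d

/-- A dimension group: a countable partially ordered abelian group (translation
invariant order) with order unit `u`, in which every finite subset is contained in a
subgroup order-isomorphic to a finite direct power of `(ℤ, ≤)`. -/
structure IsDimensionGroup (D : Type*) [AddCommGroup D] [PartialOrder D] (u : D) : Prop where
  add_le_add : ∀ a b c : D, a ≤ b → a + c ≤ b + c
  countable : Countable D
  unit_nonneg : 0 ≤ u
  unit_arch : ∀ x : D, ∃ n : ℕ, 0 < n ∧ x ≤ (n : ℤ) • u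
  locallyZ : ∀ s : Finset D, ∃ (k : ℕ) (S : AddSubgroup D) (e : S ≃+ (Fin k → ℤ)),
    (∀ x ∈ s, x ∈ S) ∧ ∀ a b : S, a ≤ b ↔ e a ≤ e b

/-- `r d = 0` and `l d = 0` together imply `d = 0`, and conversely
`r 0 = l 0 = 0`. -/
theorem stmt7 {D : Type*} [AddCommGroup D] [PartialOrder D] (u : D)
    (h : IsDimensionGroup D u) (r l : D → ℚ)
    (hr : ∀ d, IsLeast {q : ℚ | ratGe u d q} (r d))
    (hl : ∀ d, IsGreatest {q : ℚ | ratLe u d q} (l d)) :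
    (∀ d : D, r d = 0 → l d = 0 → d = 0) ∧ r 0 = 0 ∧ l 0 = 0 := by
  -- nonneg multiples of u are nonneg
  have hnnN : ∀ n : ℕ, 0 ≤ (n : ℤ) • u := by
    intro n
    induction n with
    | zero => simp
    | succ n ih =>
      have h1 : (0 : D) + u ≤ (n : ℤ) • u + u := h.add_le_add 0 _ u ih
      have h2 : (0 : D) ≤ 0 + u := by simpa using h.unit_nonneg
      have : ((n : ℤ) + 1) • u = (n : ℤ) • u + u := by
        rw [add_zsmul, one_zsmul]
      push_cast
      rw [this]
      exact h2.trans h1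
  have hnn : ∀ n : ℤ, 0 ≤ n → 0 ≤ n • u := by
    intro n hn
    lift n to ℕ using hn
    exact hnnN n
  have hnegle : ∀ x : D, 0 ≤ x → -x ≤ 0 := by
    intro x hx
    simpa using h.add_le_add 0 x (-x) hx
  have hnp : ∀ n : ℤ, n ≤ 0 → n • u ≤ 0 := by
    intro n hn
    have h0 := hnn (-n) (by omega)
    rw [neg_zsmul] at h0
    simpa using hnegle _ h0
  -- if some positive multiple of u is ≤ 0, then all multiples of u vanish
  have key : ∀ m : ℤ, 0 < m → m • u ≤ 0 → ∀ a : ℤ, a • u = 0 := by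
    intro m hm hmu a
    have hmu0 : m • u = 0 := le_antisymm hmu (hnn m hm.le)
    set k : ℤ := |a| with hk
    have hkm0 : (k * m) • u = 0 := by
      rw [mul_zsmul, hmu0, smul_zero]
    have h1 : a • u = (a + k * m) • u := by
      rw [add_zsmul, hkm0, add_zero]
    have h2 : a • u = (a - k * m) • u := by
      rw [sub_zsmul, hkm0]; abel
    have hkm : k ≤ k * m := le_mul_of_one_le_right (abs_nonneg a) hm
    have hak : -k ≤ a ∧ a ≤ k := ⟨neg_abs_le a, le_abs_self a⟩
    have hge : 0 ≤ a • u := by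
      rw [h1]; exact hnn _ (by omega)
    have hle : a • u ≤ 0 := by
      rw [h2]; exact hnp _ (by omega)
    exact le_antisymm hle hge
  refine ⟨?_, ?_, ?_⟩
  · intro d hr0 hl0
    have h1 := (hr d).1
    have h2 := (hl d).1
    rw [hr0] at h1
    rw [hl0] at h2
    have hd1 : (1 : ℤ) • d ≤ (0 : ℤ) • u := h1 0 1 one_pos (by norm_num)
    have hd2 : (0 : ℤ) • u ≤ (1 : ℤ) • d := h2 0 1 one_pos (by norm_num)
    simp only [one_zsmul, zero_zsmul] at hd1 hd2
    exact le_antisymm hd1 hd2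
  · -- r 0 = 0
    have hmem0 : ratGe u 0 0 := by
      intro a b hb hab
      have ha : a = 0 := by
        have : (a : ℚ) = 0 := by
          field_simp at hab
          simpa using hab.symm
        exact_mod_cast this
      simp [ha]
    have hle0 : r 0 ≤ 0 := (hr 0).2 hmem0
    by_contra hne
    have hlt : r 0 < 0 := lt_of_le_of_ne hle0 hne
    have hnum : (r 0).num < 0 := Rat.num_neg.mpr hlt
    have hden : (0 : ℤ) < ((r 0).den : ℤ) := by exact_mod_cast (r 0).den_pos
    have hrep : r 0 = ((r 0).num : ℚ) / (((r 0).den : ℤ) : ℚ) := by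
      push_cast; exact (Rat.num_div_den _).symm
    have hm := (hr 0).1 (r 0).num ((r 0).den : ℤ) hden hrep
    simp only [smul_zero] at hm
    -- 0 ≤ num • u with num < 0, so (-num) • u ≤ 0
    have hneg : (-(r 0).num) • u ≤ 0 := by
      rw [neg_zsmul]; exact hnegle _ hm
    have hall := key (-(r 0).num) (by omega) hneg
    have hmem : ratGe u 0 (r 0 - 1) := by
      intro a b hb hab
      simp [hall a]
    have := (hr 0).2 hmem
    linarith
  · -- l 0 = 0
    have hmem0 : ratLe u 0 0 := by
      intro a b hb hab
      have ha : a = 0 := by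
        have : (a : ℚ) = 0 := by
          field_simp at hab
          simpa using hab.symm
        exact_mod_cast this
      simp [ha]
    have hge0 : 0 ≤ l 0 := (hl 0).2 hmem0
    by_contra hne
    have hlt : 0 < l 0 := lt_of_le_of_ne hge0 (Ne.symm hne)
    have hnum : 0 < (l 0).num := Rat.num_pos.mpr hlt
    have hden : (0 : ℤ) < ((l 0).den : ℤ) := by exact_mod_cast (l 0).den_pos
    have hrep : l 0 = ((l 0).num : ℚ) / (((l 0).den : ℤ) : ℚ) := by
      push_cast; exact (Rat.num_div_den _).symm
    have hm := (hl 0).1 (l 0).num ((l 0).den : ℤ) hden hrep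
    simp only [smul_zero] at hm
    have hall := key ((l 0).num) hnum hm
    have hmem : ratLe u 0 (l 0 + 1) := by
      intro a b hb hab
      simp [hall a]
    have := (hl 0).2 hmem
    linarith
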